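/- For the logistic ODE dy/dt = λ y (1 - y) - μ y with λ > μ > 0: if y(0) ≥ (λ-μ)/λ then |y(t) - (λ-μ)/λ| ≤ |y(0) - (λ-μ)/λ| e^{-(λ-μ)t} and (λ-μ)/λ ≤ y(t) ≤ y(0) for all t ≥ 0; if 0 < y(0) ≤ (λ-μ)/λ then |y(t) - (λ-μ)/λ| ≤ ((λ-μ)/(λ y(0))) |y(0) - (λ-μ)/λ| e^{-(λ-μ)t} and y(0) ≤ y(t) ≤ (λ-μ)/λ for all t ≥ 0. -/

import Mathlib

/-- Monotone convergence bounds for the logistic ODE `dy/dt = λy(1-y) - μy`, `λ > μ > 0`: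
if `y(0) ≥ (λ-μ)/λ` then `|y(t) - (λ-μ)/λ| ≤ |y(0) - (λ-μ)/λ| e^{-(λ-μ)t}` and
`(λ-μ)/λ ≤ y(t) ≤ y(0)`; if `0 < y(0) ≤ (λ-μ)/λ` then
`|y(t) - (λ-μ)/λ| ≤ ((λ-μ)/(λy(0)))|y(0) - (λ-μ)/λ| e^{-(λ-μ)t}` and
`y(0) ≤ y(t) ≤ (λ-μ)/λ`, for all `t ≥ 0`. -/
theorem logistic_ode_convergence_bounds
    (lam mu : ℝ) (hmu : 0 < mu) (hlt : mu < lam)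
    (y : ℝ → ℝ) (hy0 : 0 < y 0)
    (hode : ∀ t : ℝ, HasDerivAt y (lam * y t * (1 - y t) - mu * y t) t) :
    ∀ t : ℝ, 0 ≤ t →
      ((lam - mu) / lam ≤ y 0 →
        |y t - (lam - mu) / lam| ≤ |y 0 - (lam - mu) / lam| * Real.exp (-(lam - mu) * t) ∧
        (lam - mu) / lam ≤ y t ∧ y t ≤ y 0) ∧
      (y 0 ≤ (lam - mu) / lam →
        |y t - (lam - mu) / lam|
            ≤ ((lam - mu) / (lam * y 0)) * |y 0 - (lam - mu) / lam|
                * Real.exp (-(lam - mu) * t) ∧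
        y 0 ≤ y t ∧ y t ≤ (lam - mu) / lam) := by
  have hk : 0 < lam - mu := sub_pos.2 hlt
  have hlam : 0 < lam := hmu.trans hlt
  have hydiff : Differentiable ℝ y := fun t => (hode t).differentiableAt
  have hyc : Continuous y := hydiff.continuous
  set g : ℝ → ℝ := fun t => lam * (1 - y t) - mu with hgdef
  have hgc : Continuous g := ((continuous_const.mul (continuous_const.sub hyc)).sub continuous_const)
  set G : ℝ → ℝ := fun t => ∫ s in (0:ℝ)..t, g s with hGdef
  have hGd : ∀ t, HasDerivAt G (g t) t := fun t => (hgc.integral_hasStrictDerivAt 0 t).hasDerivAt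
  -- positivity of y
  have hconst : ∀ t, y t * Real.exp (-G t) = y 0 := by
    have hd : ∀ t, HasDerivAt (fun t => y t * Real.exp (-G t)) 0 t := by
      intro t
      have h2 : HasDerivAt (fun t => Real.exp (-G t)) (Real.exp (-G t) * (-g t)) t := by
        simpa [mul_comm] using ((hGd t).neg).exp
      have h := (hode t).mul h2
      refine h.congr_deriv ?_
      simp only [hgdef]
      ring
    intro t
    have := is_const_of_deriv_eq_zero (fun t => (hd t).differentiableAt)
      (fun t => (hd t).deriv) t 0
    simpa [hGdef, intervalIntegral.integral_same] using this
  have hypos : ∀ t, 0 < y t := by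
    intro t
    have h := hconst t
    have he : 0 < Real.exp (-G t) := Real.exp_pos _
    nlinarith
  -- u = 1/y satisfies a linear ODE
  set u : ℝ → ℝ := fun t => (y t)⁻¹ with hudef
  have hupos : ∀ t, 0 < u t := fun t => inv_pos.2 (hypos t)
  have hud : ∀ t, HasDerivAt u (lam - (lam - mu) * u t) t := by
    intro t
    have h := (hode t).inv (hypos t).ne'
    refine h.congr_deriv ?_
    have hy := (hypos t).ne'
    simp only [hudef]
    field_simp
    ring
  set c : ℝ := lam / (lam - mu) with hcdef
  have hcpos : 0 < c := div_pos hlam hk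
  have hw : ∀ t, (u t - c) * Real.exp ((lam - mu) * t) = u 0 - c := by
    have hd : ∀ t, HasDerivAt (fun t => (u t - c) * Real.exp ((lam - mu) * t)) 0 t := by
      intro t
      have h2 : HasDerivAt (fun t => Real.exp ((lam - mu) * t))
          (Real.exp ((lam - mu) * t) * (lam - mu)) t := by
        simpa [mul_comm] using ((hasDerivAt_id t).const_mul (lam - mu)).exp
      have h := ((hud t).sub_const c).mul h2
      refine h.congr_deriv ?_
      have hkne : (lam - mu) ≠ 0 := hk.ne'
      simp only [hcdef]
      field_simp
      ring
    intro t
    have := is_const_of_deriv_eq_zero (fun t => (hd t).differentiableAt)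
      (fun t => (hd t).deriv) t 0
    simpa using this
  have hufor : ∀ t, u t = c + (u 0 - c) * Real.exp (-((lam - mu) * t)) := by
    intro t
    have h := hw t
    have he : Real.exp ((lam - mu) * t) ≠ 0 := Real.exp_ne_zero _
    rw [Real.exp_neg, ← h]
    field_simp
    ring
  -- now the algebra
  intro t ht
  have hb : (lam - mu) / lam = c⁻¹ := by
    rw [hcdef]
    field_simp
  have hexp : Real.exp (-(lam - mu) * t) = Real.exp (-((lam - mu) * t)) := by rw [neg_mul]
  set e : ℝ := Real.exp (-((lam - mu) * t)) with hedef
  have he0 : 0 < e := Real.exp_pos _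
  have he1 : e ≤ 1 := Real.exp_le_one_iff.2 (by nlinarith)
  have hut : u t = c + (u 0 - c) * e := hufor t
  have hyu : ∀ s, y s = (u s)⁻¹ := by
    intro s; simp [hudef]
  have hy0u : y 0 * u 0 = 1 := by
    simp [hudef]
    exact mul_inv_cancel₀ hy0.ne'
  have hytu : y t * u t = 1 := by
    simp [hudef]
    exact mul_inv_cancel₀ (hypos t).ne'
  have hu0pos := hupos 0
  have hutpos := hupos t
  rw [hb, hexp]
  constructor
  · intro h1
    -- y 0 ≥ 1/c  ⇒ u 0 ≤ c
    have hbpos : 0 < c⁻¹ := inv_pos.2 hcpos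
    have hu0c : u 0 ≤ c := by
      rw [hudef]
      calc (y 0)⁻¹ ≤ (c⁻¹)⁻¹ := by
            exact inv_anti₀ hbpos h1
        _ = c := inv_inv c
    have hutc : u t ≤ c := by nlinarith
    have hutu0 : u 0 ≤ u t := by nlinarith
    have hyt_ge : c⁻¹ ≤ y t := by
      rw [hyu t]
      exact inv_anti₀ hutpos hutc
    have hyt_le : y t ≤ y 0 := by
      rw [hyu t, hyu 0]
      exact inv_anti₀ hu0pos hutu0
    refine ⟨?_, hyt_ge, hyt_le⟩
    rw [abs_of_nonneg (by linarith), abs_of_nonneg (by linarith)]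
    have hcc : c * c⁻¹ = 1 := mul_inv_cancel₀ hcpos.ne'
    have e1 : y t - c⁻¹ = (c - u 0) * e * (y t * c⁻¹) := by
      linear_combination (-(y t * c⁻¹)) * hut + c⁻¹ * hytu + (-(y t)) * hcc
    have e2 : y 0 - c⁻¹ = (c - u 0) * (y 0 * c⁻¹) := by
      linear_combination c⁻¹ * hy0u + (-(y 0)) * hcc
    rw [e1, e2]
    have h3 : 0 ≤ c - u 0 := by linarith
    have h4 : y t * c⁻¹ ≤ y 0 * c⁻¹ := mul_le_mul_of_nonneg_right hyt_le hbpos.le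
    calc (c - u 0) * e * (y t * c⁻¹) ≤ (c - u 0) * e * (y 0 * c⁻¹) :=
          mul_le_mul_of_nonneg_left h4 (mul_nonneg h3 he0.le)
      _ = (c - u 0) * (y 0 * c⁻¹) * e := by ring
  · intro h2
    have hbpos : 0 < c⁻¹ := inv_pos.2 hcpos
    have hu0c : c ≤ u 0 := by
      rw [hudef]
      calc c = (c⁻¹)⁻¹ := (inv_inv c).symm
        _ ≤ (y 0)⁻¹ := inv_anti₀ hy0 h2
    have hutc : c ≤ u t := by nlinarith
    have hutu0 : u t ≤ u 0 := by nlinarith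
    have hyt_le : y t ≤ c⁻¹ := by
      rw [hyu t]
      exact inv_anti₀ hcpos hutc
    have hyt_ge : y 0 ≤ y t := by
      rw [hyu t, hyu 0]
      exact inv_anti₀ hutpos hutu0
    refine ⟨?_, hyt_ge, hyt_le⟩
    rw [abs_of_nonpos (by linarith), abs_of_nonpos (by linarith)]
    have hcoef : (lam - mu) / (lam * y 0) = c⁻¹ * u 0 := by
      rw [hcdef, hudef]
      field_simp
    rw [hcoef, neg_sub, neg_sub]
    have hcc : c * c⁻¹ = 1 := mul_inv_cancel₀ hcpos.ne'
    have e1 : c⁻¹ - y t = (u 0 - c) * e * (y t * c⁻¹) := by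
      linear_combination (y t * c⁻¹) * hut + (-c⁻¹) * hytu + (y t) * hcc
    have e2 : c⁻¹ - y 0 = (u 0 - c) * (y 0 * c⁻¹) := by
      linear_combination (-c⁻¹) * hy0u + (y 0) * hcc
    rw [e1, e2]
    have h3 : 0 ≤ u 0 - c := by linarith
    have h4 : y t * c⁻¹ ≤ c⁻¹ * c⁻¹ := by
      have := mul_le_mul_of_nonneg_right hyt_le hbpos.le
      linarith
    calc (u 0 - c) * e * (y t * c⁻¹) ≤ (u 0 - c) * e * (c⁻¹ * c⁻¹) :=
          mul_le_mul_of_nonneg_left h4 (mul_nonneg h3 he0.le)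
      _ = c⁻¹ * u 0 * ((u 0 - c) * (y 0 * c⁻¹)) * e := by
          linear_combination (-((u 0 - c) * e * c⁻¹ * c⁻¹)) * hy0u
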